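/- (Superposition principle, decreasing case.) Let N ≥ 2 be an integer, p ≥ 2 a real number, 0 < r₀ < R₀ ≤ ∞, and let V be a continuous function on (r₀, R₀) with V ≥ 0. Let u, v be C² functions on (r₀, R₀) such that 0 < v(r) ≤ u(r) and u'(r) ≤ v'(r) < 0 for all r ∈ (r₀, R₀). If u is a radial subsolution and v is a radial supersolution of −Δ_p u − V|u|^{p−2}u = 0, then u − v is a radial subsolution of the same equation, i.e. −|u'(r) − v'(r)|^{p−2}·L(u−v)(r) − V(r)·(u(r) − v(r))^{p−1} ≤ 0 for all r ∈ (r₀, R₀). -/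

import Mathlib

/-- The ordinary differential operator `L u (r) = (p-1) u''(r) + ((N-1)/r) u'(r)`,
so that for a radial function the p-Laplacian is `Δ_p u = |u'(r)|^{p-2} L u (r)`. -/
noncomputable def Lrad (N : ℕ) (p : ℝ) (u : ℝ → ℝ) (r : ℝ) : ℝ :=
  (p - 1) * deriv (deriv u) r + (((N : ℝ) - 1) / r) * deriv u r

private lemma rpow_sub_one_mul' (x q : ℝ) (hx : 0 ≤ x) (hq : 1 ≤ q) :
    x ^ (q - 1) * x = x ^ q := by
  have h : q - 1 + 1 ≠ 0 := by
    intro h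
    rw [sub_add_cancel] at h
    exact (by linarith : q ≠ 0) h
  rw [← Real.rpow_add_one' hx h, sub_add_cancel]

private lemma young_lin' (q x t : ℝ) (hq : 1 ≤ q) (hx : 0 ≤ x) (ht : 0 ≤ t) :
    q * (t ^ (q - 1) * x) ≤ x ^ q + (q - 1) * t ^ q := by
  have hq0 : (0:ℝ) < q := lt_of_lt_of_le one_pos hq
  have h := Real.geom_mean_le_arith_mean2_weighted
    (w₁ := 1/q) (w₂ := (q-1)/q) (p₁ := x ^ q) (p₂ := t ^ q)
    (by positivity) (div_nonneg (by linarith) (by linarith)) (Real.rpow_nonneg hx q)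
    (Real.rpow_nonneg ht q)
    (by field_simp; ring)
  have e1 : (x ^ q) ^ (1/q : ℝ) = x := by
    rw [← Real.rpow_mul hx, mul_one_div, div_self hq0.ne', Real.rpow_one]
  have e2 : (t ^ q) ^ ((q-1)/q : ℝ) = t ^ (q - 1) := by
    rw [← Real.rpow_mul ht, mul_div_cancel₀ _ hq0.ne']
  rw [e1, e2] at h
  have h2 := mul_le_mul_of_nonneg_left h hq0.le
  calc q * (t ^ (q - 1) * x) = q * (x * t ^ (q-1)) := by ring
    _ ≤ q * (1/q * x ^ q + (q-1)/q * t ^ q) := h2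
    _ = x ^ q + (q - 1) * t ^ q := by field_simp

/-- Key algebraic inequality: subadditivity of the perspective function
`(x, y) ↦ x^q / y^(q-1)`, in a division-free form. -/
private lemma key_ineq' (q u v a b : ℝ) (hq : 1 ≤ q) (hv : 0 < v) (hvu : v ≤ u)
    (ha : 0 < a) (hab : a ≤ b) :
    (b - a) ^ (q - 1) * (a ^ (q - 1) * u ^ q) ≤
      a ^ (q - 1) * b ^ (q - 1) * (u - v) ^ q
        + (b - a) ^ (q - 1) * (b ^ (q - 1) * v ^ q) := by
  have hu0 : 0 < u := lt_of_lt_of_le hv hvu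
  have hb : 0 < b := lt_of_lt_of_le ha hab
  set t : ℝ := u / b with ht_def
  have ht : 0 < t := div_pos hu0 hb
  set c : ℝ := (b - a) ^ (q - 1) with hc_def
  have hc : 0 ≤ c := Real.rpow_nonneg (by linarith) _
  -- identity : u^q = (q t^{q-1} u - (q-1) t^q b) * b^{q-1}
  have E1 : u ^ (q-1) = t ^ (q-1) * b ^ (q-1) := by
    rw [← Real.mul_rpow ht.le hb.le, div_mul_cancel₀ _ hb.ne']
  have E2 : u ^ q = t ^ q * b ^ q := by
    rw [← Real.mul_rpow ht.le hb.le, div_mul_cancel₀ _ hb.ne']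
  have f1u : u ^ (q-1) * u = u ^ q := rpow_sub_one_mul' u q hu0.le hq
  have f1b : b ^ (q-1) * b = b ^ q := rpow_sub_one_mul' b q hb.le hq
  have I : u ^ q = (q * (t ^ (q-1)) * u - (q-1) * t ^ q * b) * b ^ (q-1) := by
    have h1 : t ^ (q-1) * u * b ^ (q-1) = u ^ q := by
      calc t ^ (q-1) * u * b ^ (q-1) = (t ^ (q-1) * b ^ (q-1)) * u := by ring
        _ = u ^ (q-1) * u := by rw [← E1]
        _ = u ^ q := f1u
    have h2 : t ^ q * b * b ^ (q-1) = u ^ q := by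
      calc t ^ q * b * b ^ (q-1) = t ^ q * (b ^ (q-1) * b) := by ring
        _ = t ^ q * b ^ q := by rw [f1b]
        _ = u ^ q := E2.symm
    linear_combination (-q) * h1 + (q-1) * h2
  -- Young bound 1 : c * (q t^{q-1}(u-v) - (q-1) t^q (b-a)) ≤ (u-v)^q
  have M1 : (t * (b-a)) ^ (q-1) = t ^ (q-1) * (b-a) ^ (q-1) :=
    Real.mul_rpow ht.le (by linarith)
  have M2 : (t * (b-a)) ^ q = t ^ q * (b-a) ^ q :=
    Real.mul_rpow ht.le (by linarith)
  have fc : c * (b - a) = (b - a) ^ q := rpow_sub_one_mul' (b-a) q (by linarith) hq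
  have B1 : c * (q * (t ^ (q-1)) * (u - v) - (q-1) * t ^ q * (b - a)) ≤ (u - v) ^ q := by
    have hY := young_lin' q (u - v) (t * (b - a)) hq (by linarith)
      (mul_nonneg ht.le (by linarith))
    rw [M1, M2, ← fc] at hY
    linarith [hY]
  -- Young bound 2 : a^{q-1} * (q t^{q-1} v - (q-1) t^q a) ≤ v^q
  have N1 : (t * a) ^ (q-1) = t ^ (q-1) * a ^ (q-1) := Real.mul_rpow ht.le ha.le
  have N2 : (t * a) ^ q = t ^ q * a ^ q := Real.mul_rpow ht.le ha.le
  have fa : a ^ (q-1) * a = a ^ q := rpow_sub_one_mul' a q ha.le hq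
  have B2 : a ^ (q-1) * (q * (t ^ (q-1)) * v - (q-1) * t ^ q * a) ≤ v ^ q := by
    have hY := young_lin' q v (t * a) hq hv.le (mul_nonneg ht.le ha.le)
    rw [N1, N2, ← fa] at hY
    linarith [hY]
  -- assemble
  have I2 : c * (a ^ (q-1) * u ^ q) =
      a ^ (q-1) * b ^ (q-1) * (c * (q * (t ^ (q-1)) * (u - v) - (q-1) * t ^ q * (b - a)))
        + c * b ^ (q-1) * (a ^ (q-1) * (q * (t ^ (q-1)) * v - (q-1) * t ^ q * a)) := by
    linear_combination (c * a ^ (q-1)) * I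
  have hab' : (0:ℝ) ≤ a ^ (q-1) * b ^ (q-1) := by positivity
  have hcb : (0:ℝ) ≤ c * b ^ (q-1) := by positivity
  calc c * (a ^ (q-1) * u ^ q)
      = a ^ (q-1) * b ^ (q-1) * (c * (q * (t ^ (q-1)) * (u - v) - (q-1) * t ^ q * (b - a)))
        + c * b ^ (q-1) * (a ^ (q-1) * (q * (t ^ (q-1)) * v - (q-1) * t ^ q * a)) := I2
    _ ≤ a ^ (q-1) * b ^ (q-1) * (u - v) ^ q + c * b ^ (q-1) * v ^ q :=
        add_le_add (mul_le_mul_of_nonneg_left B1 hab') (mul_le_mul_of_nonneg_left B2 hcb)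
    _ = a ^ (q-1) * b ^ (q-1) * (u - v) ^ q + c * (b ^ (q-1) * v ^ q) := by ring

/-- Superposition principle, decreasing case: if `u` is a radial subsolution and `v`
a radial supersolution of `-Δ_p u - V |u|^{p-2} u = 0` on `(r₀, R₀)`, with
`0 < v ≤ u` and `u' ≤ v' < 0`, `V ≥ 0`, `p ≥ 2`, then `u - v` is a radial subsolution. -/
theorem superposition_decreasing (N : ℕ) (hN : 2 ≤ N) (p : ℝ) (hp : 2 ≤ p)
    (r₀ : ℝ) (R₀ : EReal) (hr₀ : 0 < r₀) (hR : (r₀ : EReal) < R₀)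
    (V u v : ℝ → ℝ)
    (hVcont : ContinuousOn V {r : ℝ | r₀ < r ∧ (r : EReal) < R₀})
    (hV : ∀ r : ℝ, r₀ < r → (r : EReal) < R₀ → 0 ≤ V r)
    (hu : ContDiffOn ℝ 2 u {r : ℝ | r₀ < r ∧ (r : EReal) < R₀})
    (hv : ContDiffOn ℝ 2 v {r : ℝ | r₀ < r ∧ (r : EReal) < R₀})
    (hvu : ∀ r : ℝ, r₀ < r → (r : EReal) < R₀ → 0 < v r ∧ v r ≤ u r)
    (hder : ∀ r : ℝ, r₀ < r → (r : EReal) < R₀ → deriv u r ≤ deriv v r ∧ deriv v r < 0)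
    (hsub : ∀ r : ℝ, r₀ < r → (r : EReal) < R₀ →
      -(|deriv u r| ^ (p - 2) * Lrad N p u r) - V r * (|u r| ^ (p - 2) * u r) ≤ 0)
    (hsup : ∀ r : ℝ, r₀ < r → (r : EReal) < R₀ →
      0 ≤ -(|deriv v r| ^ (p - 2) * Lrad N p v r) - V r * (|v r| ^ (p - 2) * v r)) :
    ∀ r : ℝ, r₀ < r → (r : EReal) < R₀ →
      -(|deriv u r - deriv v r| ^ (p - 2) * Lrad N p (fun s => u s - v s) r)
        - V r * (u r - v r) ^ (p - 1) ≤ 0 := by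
  intro r hr1 hr2
  set S : Set ℝ := {r : ℝ | r₀ < r ∧ (r : EReal) < R₀} with hS_def
  have hSopen : IsOpen S := by
    have h1 : IsOpen {r : ℝ | r₀ < r} := isOpen_lt continuous_const continuous_id
    have h2 : IsOpen {r : ℝ | (r : EReal) < R₀} :=
      isOpen_lt continuous_coe_real_ereal continuous_const
    exact h1.inter h2
  have hmem : r ∈ S := ⟨hr1, hr2⟩
  have hnhds : S ∈ nhds r := hSopen.mem_nhds hmem
  -- differentiability facts
  have hud : ∀ s ∈ S, DifferentiableAt ℝ u s := fun s hs =>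
    (hu.differentiableOn (by norm_num)).differentiableAt (hSopen.mem_nhds hs)
  have hvd : ∀ s ∈ S, DifferentiableAt ℝ v s := fun s hs =>
    (hv.differentiableOn (by norm_num)).differentiableAt (hSopen.mem_nhds hs)
  have hcu : ContDiffOn ℝ 1 (deriv u) S := hu.deriv_of_isOpen hSopen (by norm_num)
  have hcv : ContDiffOn ℝ 1 (deriv v) S := hv.deriv_of_isOpen hSopen (by norm_num)
  have hu'd : DifferentiableAt ℝ (deriv u) r :=
    (hcu.differentiableOn (by norm_num)).differentiableAt hnhds
  have hv'd : DifferentiableAt ℝ (deriv v) r :=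
    (hcv.differentiableOn (by norm_num)).differentiableAt hnhds
  -- derivative of the difference
  have hw1 : deriv (fun s => u s - v s) r = deriv u r - deriv v r :=
    deriv_sub (hud r hmem) (hvd r hmem)
  have hev : deriv (fun s => u s - v s) =ᶠ[nhds r] fun s => deriv u s - deriv v s := by
    filter_upwards [hnhds] with s hs
    exact deriv_sub (hud s hs) (hvd s hs)
  have hw2 : deriv (deriv (fun s => u s - v s)) r
      = deriv (deriv u) r - deriv (deriv v) r := by
    rw [hev.deriv_eq]
    exact deriv_sub hu'd hv'd
  have hLsplit : Lrad N p (fun s => u s - v s) r = Lrad N p u r - Lrad N p v r := by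
    unfold Lrad
    rw [hw1, hw2]; ring
  -- abbreviations
  obtain ⟨hderuv, hv'neg⟩ := hder r hr1 hr2
  obtain ⟨hvpos, hvu'⟩ := hvu r hr1 hr2
  have hu'neg : deriv u r < 0 := lt_of_le_of_lt hderuv hv'neg
  have hupos : 0 < u r := lt_of_lt_of_le hvpos hvu'
  set a : ℝ := -(deriv v r) with ha_def
  set b : ℝ := -(deriv u r) with hb_def
  have ha : 0 < a := by simp [ha_def]; linarith
  have hab : a ≤ b := by simp [ha_def, hb_def]; linarith
  have hb : 0 < b := lt_of_lt_of_le ha hab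
  have habsu : |deriv u r| = b := abs_of_neg hu'neg
  have habsv : |deriv v r| = a := abs_of_neg hv'neg
  have habsw : |deriv u r - deriv v r| = b - a := by
    rw [abs_of_nonpos (by linarith)]; simp only [ha_def, hb_def]; ring
  set q : ℝ := p - 1 with hq_def
  have hq : 1 ≤ q := by simp [hq_def]; linarith
  have hq2 : p - 2 = q - 1 := by simp [hq_def]; ring
  -- rewrite sub/supersolution inequalities
  have huq : |u r| ^ (p-2) * u r = u r ^ q := by
    rw [abs_of_pos hupos, hq2]; exact rpow_sub_one_mul' (u r) q hupos.le hq
  have hvq : |v r| ^ (p-2) * v r = v r ^ q := by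
    rw [abs_of_pos hvpos, hq2]; exact rpow_sub_one_mul' (v r) q hvpos.le hq
  have h1 : -(V r * u r ^ q) ≤ b ^ (q-1) * Lrad N p u r := by
    have := hsub r hr1 hr2
    rw [habsu, huq, hq2] at this
    linarith
  have h2 : a ^ (q-1) * Lrad N p v r ≤ -(V r * v r ^ q) := by
    have := hsup r hr1 hr2
    rw [habsv, hvq, hq2] at this
    linarith
  have h3 := key_ineq' q (u r) (v r) a b hq hvpos hvu' ha hab
  have hVr := hV r hr1 hr2
  -- final computation
  rw [habsw, hLsplit, hq2]
  have hc : (0:ℝ) ≤ (b - a) ^ (q-1) := Real.rpow_nonneg (by linarith) _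
  have hK : (0:ℝ) < a ^ (q-1) * b ^ (q-1) := by positivity
  set c : ℝ := (b - a) ^ (q-1)
  set Lu : ℝ := Lrad N p u r
  set Lv : ℝ := Lrad N p v r
  set A : ℝ := a ^ (q-1)
  set B : ℝ := b ^ (q-1)
  have hA : 0 < A := Real.rpow_pos_of_pos ha _
  have hB : 0 < B := Real.rpow_pos_of_pos hb _
  have goal' : 0 ≤ c * (Lu - Lv) + V r * (u r - v r) ^ q := by
    have m1 : (c * A) * (-(V r * u r ^ q)) ≤ (c * A) * (B * Lu) :=
      mul_le_mul_of_nonneg_left h1 (by positivity)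
    have m2 : (c * B) * (A * Lv) ≤ (c * B) * (-(V r * v r ^ q)) :=
      mul_le_mul_of_nonneg_left h2 (by positivity)
    have m3 : V r * (c * (A * u r ^ q)) ≤
        V r * (A * B * (u r - v r) ^ q + c * (B * v r ^ q)) :=
      mul_le_mul_of_nonneg_left h3 hVr
    have hKey : 0 ≤ (A * B) * (c * (Lu - Lv) + V r * (u r - v r) ^ q) := by
      linarith [m1, m2, m3]
    nlinarith [hKey, hK]
  have : (u r - v r) ^ q = (u r - v r) ^ (p - 1) := by rw [hq_def]
  linarith [goal', this]
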